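/- The m-Tamari lattice T_n^{(m)} on m-ballot paths of size n is isomorphic to the upper ideal of the ordinary Tamari lattice on binary trees with nm nodes generated by the (n,m)-comb, i.e., the binary tree with n nodes on its leftmost branch each of whose right subtrees is a chain of m−1 right children. -/

import Mathlib

/-- Unlabelled binary trees. -/
inductive Tree0 where
  | leaf : Tree0
  | node : Tree0 → Tree0 → Tree0
deriving DecidableEq

namespace Tree0

/-- Number of nodes. -/
def size : Tree0 → ℕ
  | leaf => 0
  | node l r => size l + size r + 1

/-- One right rotation somewhere in the tree: `y(x(A,B),C) ↦ x(A,y(B,C))`. -/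
inductive Rot : Tree0 → Tree0 → Prop
  | root (A B C : Tree0) : Rot (node (node A B) C) (node A (node B C))
  | left {l l' : Tree0} (r : Tree0) : Rot l l' → Rot (node l r) (node l' r)
  | right (l : Tree0) {r r' : Tree0} : Rot r r' → Rot (node l r) (node l r')

/-- The Tamari order: transitive closure of right rotation. -/
def tamariLE : Tree0 → Tree0 → Prop := Relation.ReflTransGen Rot

/-- A chain of `k` right children (no left children). -/
def rightChain : ℕ → Tree0
  | 0 => leaf
  | k + 1 => node leaf (rightChain k)

/-- The `(n,m)`-comb: `n` nodes on the leftmost branch, each of whose right subtrees is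
a chain of `m-1` right children. -/
def comb : ℕ → ℕ → Tree0
  | 0, _ => leaf
  | n + 1, m => node (comb n m) (rightChain (m - 1))

end Tree0

namespace MT
open Tree0 List

open Tree0 List

lemma prefix_append_cases {α} {w x y : List α} (h : w <+: x ++ y) :
    w <+: x ∨ ∃ w₂, w = x ++ w₂ ∧ w₂ <+: y := by
  obtain ⟨t, ht⟩ := h
  rcases List.append_eq_append_iff.1 ht.symm with ⟨a', h1, h2⟩ | ⟨c', h1, h2⟩
  · exact Or.inr ⟨a', h1, ⟨t, h2.symm⟩⟩
  · exact Or.inl ⟨c', h1.symm⟩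

def Dyck (w : List Bool) : Prop :=
  w.count false = w.count true ∧ ∀ q, q <+: w → q.count false ≤ q.count true

def word : Tree0 → List Bool
  | .leaf => []
  | .node l r => word l ++ true :: (word r ++ [false])

@[simp] lemma count_word_true (t : Tree0) : (word t).count true = t.size := by
  induction t with
  | leaf => simp [word, size]
  | node l r ihl ihr => simp [word, size, ihl, ihr, List.count_append, List.count_cons]; omega

@[simp] lemma count_word_false (t : Tree0) : (word t).count false = t.size := by
  induction t with
  | leaf => simp [word, size]
  | node l r ihl ihr => simp [word, size, ihl, ihr, List.count_append, List.count_cons]; omega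

@[simp] lemma length_word (t : Tree0) : (word t).length = 2 * t.size := by
  induction t with
  | leaf => simp [word, size]
  | node l r ihl ihr => simp [word, size, ihl, ihr]; omega

lemma word_prefix_le (t : Tree0) : ∀ q, q <+: word t → q.count false ≤ q.count true := by
  induction t with
  | leaf => intro q hq; simp [word] at hq; simp [hq]
  | node l r ihl ihr =>
    intro q hq
    rw [word] at hq
    rcases prefix_append_cases hq with h | ⟨q₂, rfl, hq₂⟩
    · exact ihl _ h
    rcases List.prefix_cons_iff.1 hq₂ with rfl | ⟨q₃, rfl, hq₃⟩
    · simp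
    rcases prefix_append_cases hq₃ with h | ⟨q₄, rfl, hq₄⟩
    · have := ihl (word l) List.prefix_rfl
      have := ihr _ h
      simp [List.count_append, List.count_cons]; omega
    · have := ihl (word l) List.prefix_rfl
      have := ihr (word r) List.prefix_rfl
      have : q₄.count false ≤ 1 ∧ q₄.count true = 0 := by
        rcases List.prefix_cons_iff.1 hq₄ with rfl | ⟨q₅, rfl, hq₅⟩
        · simp
        · simp at hq₅; simp [hq₅]
      simp [List.count_append, List.count_cons]; omega

lemma word_dyck (t : Tree0) : Dyck (word t) :=
  ⟨by simp, word_prefix_le t⟩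


lemma exists_word_aux : ∀ (N : ℕ) (w : List Bool), w.length ≤ N → Dyck w → ∃ t, word t = w := by
  intro N
  induction N with
  | zero =>
    intro w h _
    have : w = [] := List.length_eq_zero_iff.1 (Nat.le_zero.1 h)
    exact ⟨.leaf, by simp [word, this]⟩
  | succ N ih =>
    intro w hlen hw
    rcases eq_or_ne w [] with rfl | hne
    · exact ⟨.leaf, rfl⟩
    have hwpos : 0 < w.length := List.length_pos_iff.2 hne
    set K := Nat.findGreatest (fun k => (w.take k).count false = (w.take k).count true)
      (w.length - 1) with hKdef
    have hK : (w.take K).count false = (w.take K).count true :=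
      Nat.findGreatest_spec (P := fun k => (w.take k).count false = (w.take k).count true)
        (Nat.zero_le _) (by simp)
    have hKle : K ≤ w.length - 1 := Nat.findGreatest_le _
    have hKlt : K < w.length := lt_of_le_of_lt hKle (by omega)
    obtain ⟨x, z, hxz⟩ : ∃ x z, w.drop K = x :: z := by
      rcases h : w.drop K with _ | ⟨x, z⟩
      · have := congrArg List.length h; simp at this; omega
      · exact ⟨x, z, rfl⟩
    obtain ⟨a, ha⟩ : ∃ a, w.take K = a := ⟨_, rfl⟩
    rw [ha] at hK
    have hw_eq : w = a ++ x :: z := by rw [← ha, ← hxz]; exact (List.take_append_drop K w).symm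
    have hla : a.length = K := by rw [← ha, List.length_take]; omega
    have hx : x = true := by
      by_contra hxf
      have hxf : x = false := by cases x; rfl; exact absurd rfl hxf
      subst hxf
      have hpre : a ++ [false] <+: w := ⟨z, by rw [hw_eq]; simp⟩
      have h2 := hw.2 _ hpre
      simp [List.count_append] at h2
      omega
    subst hx
    have hzne : z ≠ [] := by
      intro h
      have h1 := hw.1
      rw [hw_eq, h] at h1
      simp [List.count_append, List.count_cons] at h1
      omega
    obtain ⟨b, c, hbc⟩ : ∃ b c, z = b ++ [c] := by
      rcases List.eq_nil_or_concat z with h | ⟨b, c, h⟩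
      · exact absurd h hzne
      · exact ⟨b, c, by simpa using h⟩
    have hc : c = false := by
      by_contra hcf
      have hcf : c = true := by cases c; exact absurd rfl hcf; rfl
      subst hcf
      have hpre : a ++ true :: b <+: w := ⟨[true], by rw [hw_eq, hbc]; simp⟩
      have h2 := hw.2 _ hpre
      have h1 := hw.1
      rw [hw_eq, hbc] at h1
      simp [List.count_append, List.count_cons] at h1 h2
      omega
    subst hc
    have hw_eq2 : w = a ++ true :: (b ++ [false]) := by rw [hw_eq, hbc]
    have haD : Dyck a := ⟨hK, fun q hq => hw.2 q (hq.trans (ha ▸ List.take_prefix K w))⟩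
    have hbal_b : b.count false = b.count true := by
      have h1 := hw.1
      rw [hw_eq2] at h1
      simp [List.count_append, List.count_cons] at h1
      omega
    have hbD : Dyck b := by
      refine ⟨hbal_b, ?_⟩
      intro q hq
      obtain ⟨s, hs⟩ := hq
      have hpre : a ++ true :: q <+: w := ⟨s ++ [false], by rw [hw_eq2, ← hs]; simp⟩
      have h2 := hw.2 _ hpre
      simp [List.count_append, List.count_cons] at h2
      by_contra hlt
      push_neg at hlt
      have heq : q.count false = q.count true + 1 := by omega
      have hlen2 : w.length = K + 2 + b.length := by
        have := congrArg List.length hw_eq2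
        simp at this; omega
      have hqb : q.length ≤ b.length := by
        have := congrArg List.length hs
        simp at this; omega
      have hgr := Nat.findGreatest_is_greatest
        (P := fun k => (w.take k).count false = (w.take k).count true)
        (n := w.length - 1) (k := K + 1 + q.length) (by omega) (by omega)
      apply hgr
      have htake : w.take (K + 1 + q.length) = a ++ true :: q := by
        conv_lhs => rw [hw_eq2, show a ++ true :: (b ++ [false])
          = (a ++ true :: q) ++ (s ++ [false]) by rw [← hs]; simp]
        exact List.take_left' (by simp [hla]; omega)
      show (w.take (K + 1 + q.length)).count false = (w.take (K + 1 + q.length)).count true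
      rw [htake]
      simp [List.count_append, List.count_cons]
      omega
    have hlb : b.length ≤ N := by
      have := congrArg List.length hw_eq2
      simp at this; omega
    obtain ⟨ta, hta⟩ := ih a (by omega) haD
    obtain ⟨tb, htb⟩ := ih b (by omega) hbD
    exact ⟨.node ta tb, by rw [word, hta, htb]; exact hw_eq2.symm⟩

lemma exists_word {w : List Bool} (hw : Dyck w) : ∃ t, word t = w :=
  exists_word_aux w.length w le_rfl hw

lemma balanced_prefix_le {l r : Tree0} {k : ℕ}
    (hbal : ((word (.node l r)).take k).count false = ((word (.node l r)).take k).count true)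
    (hk : k < (word (.node l r)).length) : k ≤ (word l).length := by
  by_contra h
  push_neg at h
  set w := word (.node l r) with hwdef
  have hw_eq : w = word l ++ true :: (word r ++ [false]) := rfl
  set j := k - (word l).length - 1 with hj
  have htake : w.take k = word l ++ true :: ((word r ++ [false]).take j) := by
    rw [hw_eq, List.take_append]
    rw [List.take_of_length_le (by omega)]
    congr 1
    rw [show k - (word l).length = j + 1 by omega]
    simp
  set q := (word r ++ [false]).take j with hq
  have hqpre : q <+: word r ++ [false] := List.take_prefix _ _
  rw [htake] at hbal
  simp [List.count_append, List.count_cons] at hbal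
  rcases prefix_append_cases hqpre with hqr | ⟨q₄, hq4, hq4pre⟩
  · have := word_prefix_le r _ hqr
    omega
  · rcases List.prefix_cons_iff.1 hq4pre with h4 | ⟨t4, ht4, ht4p⟩
    · rw [h4, List.append_nil] at hq4
      rw [hq4] at hbal
      simp at hbal
    · have ht4' : t4 = [] := List.prefix_nil.1 ht4p
      subst ht4'
      rw [ht4] at hq4
      have hlen : (w.take k).length = k := by rw [List.length_take]; omega
      rw [htake, hq4] at hlen
      simp at hlen
      rw [hwdef, length_word] at hk
      have h1 : (word l).length = 2 * l.size := length_word l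
      have h2 : (word r).length = 2 * r.size := length_word r
      simp [Tree0.size] at hk
      omega

lemma word_inj : ∀ {t t' : Tree0}, word t = word t' → t = t' := by
  intro t
  induction t with
  | leaf =>
    intro t' h
    cases t' with
    | leaf => rfl
    | node l' r' => exfalso; have := congrArg List.length h; simp [word] at this
  | node l r ihl ihr =>
    intro t' h
    cases t' with
    | leaf => exfalso; have := congrArg List.length h; simp [word] at this
    | node l' r' =>
      have key : ∀ (a b a' b' : Tree0), word (.node a b) = word (.node a' b') →
          (word a).length ≤ (word a').length := by
        intro a b a' b' hab
        have hta : (word (.node a' b')).take (word a).length = word a := by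
          rw [← hab, show word (.node a b) = word a ++ (true :: (word b ++ [false])) from rfl]
          exact List.take_left' rfl
        have h1 : ((word (.node a' b')).take (word a).length).count false
            = ((word (.node a' b')).take (word a).length).count true := by
          rw [hta]; simp
        have h2 : (word a).length < (word (.node a' b')).length := by
          rw [← hab]
          rw [length_word, length_word]
          simp [Tree0.size]
        exact balanced_prefix_le h1 h2
      have hlen : (word l).length = (word l').length :=
        le_antisymm (key _ _ _ _ h) (key _ _ _ _ h.symm)
      rw [word, word] at h
      obtain ⟨h1, h2⟩ := List.append_inj h hlen
      injection h2 with _ h3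
      obtain ⟨h4, _⟩ := List.append_inj' h3 rfl
      rw [ihl h1, ihr h4]


end MT

/-- Paths with north (`true`) and east (`false`) unit steps. `p` is an `m`-ballot path
of size `n` if it has `n` north steps, `mn` east steps, and stays weakly above the
line `y = x/m` (each prefix has at most `m` times as many east steps as north steps). -/
def IsBallot (m n : ℕ) (p : List Bool) : Prop :=
  p.count true = n ∧ p.count false = m * n ∧
    ∀ q : List Bool, q <+: p → q.count false ≤ m * q.count true

/-- A primitive path: nonempty, ends on the line `y = x/m`, and every proper nonempty
prefix stays strictly above the line. -/
def IsPrimitive (m : ℕ) (p : List Bool) : Prop :=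
  p ≠ [] ∧ p.count false = m * p.count true ∧
    ∀ q : List Bool, q <+: p → q ≠ [] → q ≠ p → q.count false < m * q.count true

/-- Rotation on paths: exchange an east step with the primitive subpath following it. -/
def PathRot (m : ℕ) (p q : List Bool) : Prop :=
  ∃ u d v : List Bool, IsPrimitive m d ∧
    p = u ++ false :: (d ++ v) ∧ q = u ++ d ++ false :: v


namespace MT
open Tree0 List

lemma primitive_one {c : List Bool} (hbal : c.count false = c.count true)
    (hpre : ∀ q, q <+: c → q.count false ≤ q.count true) :
    IsPrimitive 1 (true :: (c ++ [false])) := by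
  refine ⟨by simp, ?_, ?_⟩
  · simp [List.count_append, List.count_cons, hbal]
  · intro q hq hne hqfull
    rcases List.prefix_cons_iff.1 hq with rfl | ⟨q₃, rfl, hq₃⟩
    · exact absurd rfl hne
    rcases prefix_append_cases hq₃ with h | ⟨q₄, rfl, hq₄⟩
    · have := hpre _ h
      simp [List.count_cons]
      omega
    · rcases List.prefix_cons_iff.1 hq₄ with rfl | ⟨t, rfl, ht⟩
      · simp [List.count_append, List.count_cons, hbal]
      · have : t = [] := List.prefix_nil.1 ht
        subst this
        exact absurd rfl hqfull

lemma primitive_one_word (C : Tree0) : IsPrimitive 1 (true :: (word C ++ [false])) :=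
  primitive_one (by simp) (word_prefix_le C)

lemma rot_pathRot {t t' : Tree0} (h : Rot t t') : PathRot 1 (word t) (word t') := by
  induction h with
  | root A B C =>
    refine ⟨word A ++ true :: word B, true :: (word C ++ [false]), [],
      primitive_one_word C, ?_, ?_⟩
    · simp [word]
    · simp [word]
  | left r h ih =>
    obtain ⟨u, d, v, hd, h1, h2⟩ := ih
    exact ⟨u, d, v ++ true :: (word r ++ [false]), hd, by simp [word, h1], by simp [word, h2]⟩
  | right l h ih =>
    obtain ⟨u, d, v, hd, h1, h2⟩ := ih
    exact ⟨word l ++ true :: u, d, v ++ [false], hd, by simp [word, h1], by simp [word, h2]⟩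

lemma pathRot_lift : ∀ (t : Tree0) (u d v : List Bool), IsPrimitive 1 d →
    word t = u ++ false :: (d ++ v) →
    ∃ t', Rot t t' ∧ word t' = u ++ d ++ false :: v := by
  intro t
  induction t with
  | leaf =>
    intro u d v hd h
    exfalso
    have := congrArg List.length h
    simp [word] at this
  | node l r ihl ihr =>
    intro u d v hd h
    rw [word] at h
    rcases List.append_eq_append_iff.1 h with ⟨k, hk1, hk2⟩ | ⟨k, hk1, hk2⟩
    · -- u = word l ++ k, true :: (word r ++ [false]) = k ++ false :: (d ++ v)
      rcases k with _ | ⟨x, k₂⟩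
      · exfalso; simp at hk2
      · injection hk2 with hx hk2
        subst hx
        simp only [List.append_eq] at hk2
        rcases List.eq_nil_or_concat' v with rfl | ⟨v₂, c, rfl⟩
        · -- v = [] : word r ++ [false] = k₂ ++ false :: d
          exfalso
          rcases List.eq_nil_or_concat' d with rfl | ⟨d₃, x, rfl⟩
          · exact hd.1 rfl
          · simp only [List.append_nil] at hk2
            rw [show k₂ ++ false :: (d₃ ++ [x]) = (k₂ ++ false :: d₃) ++ [x] by simp] at hk2
            obtain ⟨hr, hx⟩ := List.append_inj' hk2 rfl
            injection hx with hx
            subst hx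
            rcases eq_or_ne d₃ [] with rfl | hd₃
            · have := hd.2.1; simp at this
            · have hlt := hd.2.2 d₃ ⟨[false], rfl⟩ hd₃ (by
                intro hh
                have := congrArg List.length hh
                simp at this)
              have hbal := hd.2.1
              have hpre := word_prefix_le r (k₂ ++ [false]) ⟨d₃, by rw [hr]; simp⟩
              have hrbal : (word r).count false = (word r).count true := by simp
              rw [hr] at hrbal
              simp [List.count_append, List.count_cons] at hbal hpre hrbal hlt ⊢
              omega
        · -- v = v₂ ++ [c]
          rw [show k₂ ++ false :: (d ++ (v₂ ++ [c])) = (k₂ ++ false :: (d ++ v₂)) ++ [c] by simp]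
            at hk2
          obtain ⟨hr, hx⟩ := List.append_inj' hk2 rfl
          injection hx with hx
          subst hx
          obtain ⟨r', hrot, hr'⟩ := ihr k₂ d v₂ hd hr
          refine ⟨.node l r', Rot.right l hrot, ?_⟩
          rw [word, hr', hk1]
          simp
    · -- word l = u ++ k, false :: (d ++ v) = k ++ true :: (word r ++ [false])
      rcases k with _ | ⟨x, k'⟩
      · exfalso; simp at hk2
      · injection hk2 with hx hk2
        subst hx
        simp only [List.append_eq] at hk2
        rcases List.append_eq_append_iff.1 hk2 with ⟨j, hj1, hj2⟩ | ⟨j, hj1, hj2⟩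
        · -- k' = d ++ j, v = j ++ true :: (word r ++ [false])
          obtain ⟨l', hrot, hl'⟩ := ihl u d j hd (by rw [hk1, hj1])
          refine ⟨.node l' r, Rot.left r hrot, ?_⟩
          rw [word, hl', hj2]
          simp
        · -- d = k' ++ j, true :: (word r ++ [false]) = j ++ v
          rcases j with _ | ⟨y, j₂⟩
          · -- j = [] : d = k', v = true :: (word r ++ [false])
            replace hj1 : k' = d := by simpa using hj1.symm
            replace hj2 : v = true :: (word r ++ [false]) := by simpa using hj2.symm
            obtain ⟨l', hrot, hl'⟩ := ihl u d [] hd (by rw [hk1, hj1]; simp)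
            refine ⟨.node l' r, Rot.left r hrot, ?_⟩
            rw [word, hl', hj2]
            simp
          · injection hj2 with hy hj2
            subst hy
            simp only [List.append_eq] at hj2
            -- d = k' ++ true :: j₂, word r ++ [false] = j₂ ++ v
            rcases eq_or_ne k' [] with rfl | hk'ne
            · -- root case candidate
              replace hj1 : d = true :: j₂ := by simpa using hj1
              rcases List.eq_nil_or_concat' v with rfl | ⟨v₂, c, rfl⟩
              · -- v = [] : j₂ = word r ++ [false], d = true :: (word r ++ [false])
                simp only [List.append_nil] at hj2
                subst hj2
                cases l with
                | leaf =>
                  exfalso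
                  have := congrArg List.length hk1
                  simp [word] at this
                | node l₁ l₂ =>
                  have hl : word (Tree0.node l₁ l₂) = (word l₁ ++ true :: word l₂) ++ [false] := by
                    rw [word]; simp
                  rw [hl] at hk1
                  obtain ⟨hu, _⟩ := List.append_inj' hk1.symm rfl
                  refine ⟨.node l₁ (.node l₂ r), Rot.root l₁ l₂ r, ?_⟩
                  rw [word, word, hu, hj1]
                  simp
              · -- v = v₂ ++ [c] : word r = j₂ ++ v₂, contradiction
                exfalso
                rw [show j₂ ++ (v₂ ++ [c]) = (j₂ ++ v₂) ++ [c] by simp] at hj2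
                obtain ⟨hr, hx⟩ := List.append_inj' hj2.symm rfl
                injection hx with hx
                subst hx
                have hpre := word_prefix_le r j₂ ⟨v₂, hr⟩
                have hbal := hd.2.1
                rw [hj1] at hbal
                simp [List.count_cons] at hbal
                omega
            · -- k' ≠ [] : contradiction
              exfalso
              have hk'lt := hd.2.2 k' ⟨true :: j₂, hj1.symm⟩ hk'ne (by
                intro hh
                rw [hh] at hj1
                have := congrArg List.length hj1
                simp at this)
              have hbal := hd.2.1
              rw [hj1] at hbal
              have hlbal : (word l).count false = (word l).count true := by simp
              rw [hk1] at hlbal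
              have hupre := word_prefix_le l u ⟨false :: k', hk1.symm⟩
              rcases List.eq_nil_or_concat' v with rfl | ⟨v₂, c, rfl⟩
              · simp only [List.append_nil] at hj2
                subst hj2
                simp [List.count_append, List.count_cons] at hbal hk'lt hlbal
                omega
              · rw [show j₂ ++ (v₂ ++ [c]) = (j₂ ++ v₂) ++ [c] by simp] at hj2
                obtain ⟨hr, hx⟩ := List.append_inj' hj2.symm rfl
                have hj₂pre := word_prefix_le r j₂ ⟨v₂, hr⟩
                simp [List.count_append, List.count_cons] at hbal hk'lt hlbal hupre hj₂pre
                omega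

end MT


namespace MT
open Tree0 List

def blow (m : ℕ) : List Bool → List Bool
  | [] => []
  | true :: p => List.replicate m true ++ blow m p
  | false :: p => false :: blow m p

@[simp] lemma blow_nil (m : ℕ) : blow m [] = [] := rfl
@[simp] lemma blow_cons_true (m : ℕ) (p) :
    blow m (true :: p) = List.replicate m true ++ blow m p := rfl
@[simp] lemma blow_cons_false (m : ℕ) (p) : blow m (false :: p) = false :: blow m p := rfl

lemma blow_append (m : ℕ) (p q : List Bool) : blow m (p ++ q) = blow m p ++ blow m q := by
  induction p with
  | nil => simp
  | cons x p ih => cases x <;> simp [ih]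

@[simp] lemma count_true_blow (m : ℕ) (p : List Bool) :
    (blow m p).count true = m * p.count true := by
  induction p with
  | nil => simp
  | cons x p ih =>
    cases x
    · simp [ih, List.count_cons]
    · simp [ih, List.count_append, List.count_cons, List.count_replicate, Nat.mul_add]
      omega

@[simp] lemma count_false_blow (m : ℕ) (p : List Bool) :
    (blow m p).count false = p.count false := by
  induction p with
  | nil => simp
  | cons x p ih =>
    cases x <;> simp [ih, List.count_append, List.count_cons, List.count_replicate]

lemma length_counts (p : List Bool) : p.length = p.count false + p.count true := by
  induction p with
  | nil => simp
  | cons x p ih =>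
    cases x
    · simp [List.count_cons]; omega
    · simp [List.count_cons]; omega

lemma blow_eq_nil {m : ℕ} (hm : 0 < m) {p : List Bool} (h : blow m p = []) : p = [] := by
  cases p with
  | nil => rfl
  | cons x p =>
    exfalso
    cases x
    · simp at h
    · have := congrArg List.length h
      simp at this
      omega

lemma blow_inj {m : ℕ} (hm : 0 < m) : ∀ {p q : List Bool}, blow m p = blow m q → p = q := by
  intro p
  induction p with
  | nil => intro q h; exact (blow_eq_nil hm h.symm).symm
  | cons x p ih =>
    intro q h
    cases q with
    | nil =>
      exfalso
      have := blow_eq_nil hm (p := x :: p) h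
      simp at this
    | cons y q =>
      obtain ⟨m', rfl⟩ : ∃ m', m = m' + 1 := ⟨m - 1, by omega⟩
      cases x <;> cases y
      · simp at h; rw [ih h]
      · exfalso; simp [List.replicate_succ] at h
      · exfalso; simp [List.replicate_succ] at h
      · simp [List.replicate_succ] at h
        rw [ih h]

lemma prefix_blow {m : ℕ} : ∀ {p w : List Bool}, w <+: blow m p →
    ∃ p₁ j, p₁ <+: p ∧ w = blow m p₁ ++ List.replicate j true := by
  intro p
  induction p with
  | nil => intro w hw; simp at hw; exact ⟨[], 0, by simp [hw]⟩
  | cons x p ih =>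
    intro w hw
    cases x
    · simp only [blow_cons_false] at hw
      rcases List.prefix_cons_iff.1 hw with rfl | ⟨w₂, rfl, hw₂⟩
      · exact ⟨[], 0, by simp⟩
      · obtain ⟨p₁, j, hp₁, hw₂'⟩ := ih hw₂
        exact ⟨false :: p₁, j, by simpa using hp₁, by simp [hw₂']⟩
    · simp only [blow_cons_true] at hw
      rcases prefix_append_cases hw with h | ⟨w₂, rfl, hw₂⟩
      · refine ⟨[], w.length, by simp, ?_⟩
        have := List.prefix_iff_eq_take.1 h
        rw [List.take_replicate] at this
        have hlen : w.length ≤ m := by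
          have := h.length_le; simpa using this
        rw [Nat.min_eq_left hlen] at this
        simpa using this
      · obtain ⟨p₁, j, hp₁, hw₂'⟩ := ih hw₂
        exact ⟨true :: p₁, j, by simpa using hp₁, by simp [hw₂']⟩

lemma blow_prefix_mono {m : ℕ} {p q : List Bool} (h : p <+: q) : blow m p <+: blow m q := by
  obtain ⟨s, rfl⟩ := h
  rw [blow_append]
  exact ⟨_, rfl⟩

lemma blow_dyck {m n : ℕ} {p : List Bool} (hb : IsBallot m n p) : Dyck (blow m p) := by
  constructor
  · simp [hb.1, hb.2.1]
  · intro q hq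
    obtain ⟨p₁, j, hp₁, rfl⟩ := prefix_blow hq
    have := hb.2.2 p₁ hp₁
    simp [List.count_append, List.count_replicate]
    omega

lemma blow_primitive {m : ℕ} (hm : 0 < m) {d : List Bool} (hd : IsPrimitive m d) :
    IsPrimitive 1 (blow m d) := by
  obtain ⟨hne, hbal, hpre⟩ := hd
  refine ⟨fun h => hne (blow_eq_nil hm h), by simp [hbal], ?_⟩
  intro q hq hqne hqfull
  obtain ⟨d₁, j, hd₁, rfl⟩ := prefix_blow hq
  have hd₁d : d₁ ≠ d := by
    rintro rfl
    have hlen := hq.length_le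
    simp at hlen
    have hj : j = 0 := by omega
    subst hj
    simp at hqfull
  rcases eq_or_ne d₁ [] with rfl | hd₁ne
  · have hj : 0 < j := by
      rcases Nat.eq_zero_or_pos j with rfl | hj
      · simp at hqne
      · exact hj
    simp [List.count_append, List.count_replicate]
    omega
  · have hlt := hpre d₁ hd₁ hd₁ne hd₁d
    simp [List.count_append, List.count_replicate]
    omega

lemma pathRot_blow {m : ℕ} (hm : 0 < m) {p q : List Bool} (h : PathRot m p q) :
    PathRot 1 (blow m p) (blow m q) := by
  obtain ⟨u, d, v, hd, rfl, rfl⟩ := h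
  exact ⟨blow m u, blow m d, blow m v, blow_primitive hm hd,
    by simp [blow_append], by simp [blow_append]⟩

lemma blow_split {m : ℕ} (hm : 0 < m) : ∀ {p u z : List Bool}, blow m p = u ++ false :: z →
    ∃ u' z', p = u' ++ false :: z' ∧ u = blow m u' ∧ z = blow m z' := by
  intro p
  induction p with
  | nil =>
    intro u z h
    exfalso
    have := congrArg List.length h
    simp at this
  | cons x p ih =>
    intro u z h
    cases x
    · simp only [blow_cons_false] at h
      cases u with
      | nil =>
        injection h with _ h
        exact ⟨[], p, rfl, rfl, h.symm ▸ rfl⟩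
      | cons y u₂ =>
        injection h with hy h
        subst hy
        obtain ⟨u', z', h1, h2, h3⟩ := ih h
        exact ⟨false :: u', z', by simp [h1], by simp [h2], h3⟩
    · simp only [blow_cons_true] at h
      rcases List.append_eq_append_iff.1 h with ⟨k, hk1, hk2⟩ | ⟨k, hk1, hk2⟩
      · -- u = replicate m true ++ k, blow m p = k ++ false :: z
        obtain ⟨u', z', h1, h2, h3⟩ := ih hk2
        exact ⟨true :: u', z', by simp [h1], by simp [hk1, h2], h3⟩
      · -- replicate m true = u ++ k, false :: z = k ++ blow m p
        rcases k with _ | ⟨y, k₂⟩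
        · simp only [List.append_nil] at hk1
          simp only [List.nil_append] at hk2
          obtain ⟨u', z', h1, h2, h3⟩ := ih (u := []) hk2.symm
          have hu' : u' = [] := blow_eq_nil hm h2.symm
          subst hu'
          refine ⟨[true], z', by simp [h1], ?_, h3⟩
          simp [← hk1]
        · exfalso
          injection hk2 with hy _
          have : y ∈ List.replicate m true := by
            rw [hk1]
            exact List.mem_append_right u (by simp)
          have := List.eq_of_mem_replicate this
          simp [← hy] at this

lemma primitive_one_last {d : List Bool} (hd : IsPrimitive 1 d) :
    ∃ d₃, d = d₃ ++ [false] := by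
  rcases List.eq_nil_or_concat' d with rfl | ⟨d₃, c, rfl⟩
  · exact absurd rfl hd.1
  cases c
  · exact ⟨d₃, rfl⟩
  · exfalso
    rcases eq_or_ne d₃ [] with rfl | hne
    · have := hd.2.1; simp at this
    · have h1 := hd.2.2 d₃ ⟨[true], rfl⟩ hne (by
        intro h
        have := congrArg List.length h
        simp at this)
      have h2 := hd.2.1
      simp [List.count_append, List.count_cons] at h1 h2
      omega

lemma pathRot_contract {m : ℕ} (hm : 0 < m) {p : List Bool} {w₂ : List Bool}
    (h : PathRot 1 (blow m p) w₂) :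
    ∃ q, blow m q = w₂ ∧ PathRot m p q := by
  obtain ⟨u, d, v, hd, h1, h2⟩ := h
  obtain ⟨u', z', hp, hu, hz⟩ := blow_split hm h1
  obtain ⟨d₃, rfl⟩ := primitive_one_last hd
  rw [show d₃ ++ [false] ++ v = d₃ ++ false :: v by simp] at hz
  obtain ⟨a', v', hz', hd₃, hv⟩ := blow_split hm hz.symm
  have hdblow : d₃ ++ [false] = blow m (a' ++ [false]) := by
    rw [blow_append, hd₃]; rfl
  have hprim : IsPrimitive m (a' ++ [false]) := by
    refine ⟨by simp, ?_, ?_⟩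
    · have := hd.2.1
      rw [hdblow] at this
      simp [List.count_append, List.count_cons] at this ⊢
      omega
    · intro q hq hqne hqfull
      have hblowpre : blow m q <+: blow m (a' ++ [false]) := blow_prefix_mono hq
      rw [← hdblow] at hblowpre
      have hblowne : blow m q ≠ [] := fun h => hqne (blow_eq_nil hm h)
      have hblownefull : blow m q ≠ d₃ ++ [false] := by
        intro h
        rw [hdblow] at h
        exact hqfull (blow_inj hm h)
      have := hd.2.2 _ hblowpre hblowne hblownefull
      simp [List.count_append, List.count_cons] at this ⊢
      omega
  refine ⟨u' ++ (a' ++ [false]) ++ false :: v', ?_, u', a' ++ [false], v', hprim, ?_, rfl⟩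
  · rw [h2, blow_append, blow_append, hu, ← hdblow, hv]
    simp
  · rw [hp, hz']
    simp

end MT


namespace MT
open Tree0 List

lemma primitive_count_le {m : ℕ} {d : List Bool} (hd : IsPrimitive m d) :
    ∀ q, q <+: d → q.count false ≤ m * q.count true := by
  intro q hq
  rcases eq_or_ne q [] with rfl | h1
  · simp
  rcases eq_or_ne q d with rfl | h2
  · exact le_of_eq hd.2.1
  · exact le_of_lt (hd.2.2 q hq h1 h2)

lemma primitive_true_pos {m : ℕ} {d : List Bool} (hd : IsPrimitive m d) :
    0 < d.count true := by
  rcases Nat.eq_zero_or_pos (d.count true) with h | h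
  · exfalso
    have hb := hd.2.1
    rw [h] at hb
    simp at hb
    have hl := length_counts d
    rw [h, hb] at hl
    exact hd.1 (List.length_eq_zero_iff.1 (by omega))
  · exact h

lemma ballot_pathRot {m n : ℕ} {p q : List Bool} (hb : IsBallot m n p) (h : PathRot m p q) :
    IsBallot m n q := by
  obtain ⟨u, d, v, hd, rfl, rfl⟩ := h
  obtain ⟨hc1, hc2, hc3⟩ := hb
  have hu : u.count false ≤ m * u.count true := hc3 u (List.prefix_append _ _)
  refine ⟨?_, ?_, ?_⟩
  · rw [← hc1]; simp [List.count_append, List.count_cons]; try omega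
  · rw [← hc2]; simp [List.count_append, List.count_cons]; try omega
  · intro w hw
    rw [List.append_assoc] at hw
    rcases prefix_append_cases hw with h1 | ⟨w₂, rfl, hw₂⟩
    · exact hc3 w (h1.trans (List.prefix_append _ _))
    rcases prefix_append_cases hw₂ with h2 | ⟨w₃, rfl, hw₃⟩
    · have := primitive_count_le hd _ h2
      simp [List.count_append, Nat.mul_add]
      omega
    rcases List.prefix_cons_iff.1 hw₃ with rfl | ⟨w₄, rfl, hw₄⟩
    · have := hd.2.1
      simp [List.count_append, Nat.mul_add]
      omega
    · obtain ⟨s, rfl⟩ := hw₄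
      have := hc3 (u ++ false :: (d ++ w₄)) ⟨s, by simp⟩
      simp [List.count_append, List.count_cons, Nat.mul_add] at this ⊢
      omega

lemma ballot_rtg {m n : ℕ} {p q : List Bool} (hb : IsBallot m n p)
    (h : Relation.ReflTransGen (PathRot m) p q) : IsBallot m n q := by
  induction h with
  | refl => exact hb
  | tail _ hbc ih => exact ballot_pathRot ih hbc

def pmin (m : ℕ) : ℕ → List Bool
  | 0 => []
  | n + 1 => pmin m n ++ true :: List.replicate m false

@[simp] lemma count_true_pmin (m n : ℕ) : (pmin m n).count true = n := by
  induction n with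
  | zero => rfl
  | succ n ih => simp [pmin, List.count_append, List.count_cons, List.count_replicate, ih]

@[simp] lemma count_false_pmin (m n : ℕ) : (pmin m n).count false = m * n := by
  induction n with
  | zero => simp [pmin]
  | succ n ih =>
    simp [pmin, List.count_append, List.count_cons, List.count_replicate, ih, Nat.mul_add]

lemma pmin_ballot (m n : ℕ) : IsBallot m n (pmin m n) := by
  refine ⟨by simp, by simp, ?_⟩
  induction n with
  | zero => intro q hq; simp [pmin] at hq; simp [hq]
  | succ n ih =>
    intro q hq
    rw [pmin] at hq
    rcases prefix_append_cases hq with h1 | ⟨w₂, rfl, hw₂⟩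
    · exact ih _ h1
    rcases List.prefix_cons_iff.1 hw₂ with rfl | ⟨w₃, rfl, hw₃⟩
    · simp [Nat.mul_add]
    · have h3 : w₃ = List.replicate w₃.length false := by
        have := List.prefix_iff_eq_take.1 hw₃
        rw [List.take_replicate] at this
        have hlen : w₃.length ≤ m := by simpa using hw₃.length_le
        rw [Nat.min_eq_left hlen] at this
        exact this
      have hlen : w₃.length ≤ m := by simpa using hw₃.length_le
      rw [h3]
      simp [List.count_append, List.count_cons, List.count_replicate, Nat.mul_add]
      omega

lemma word_rightChain (k : ℕ) :
    word (rightChain k) = List.replicate k true ++ List.replicate k false := by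
  induction k with
  | zero => rfl
  | succ k ih =>
    rw [show rightChain (k + 1) = Tree0.node .leaf (rightChain k) from rfl, word, ih]
    rw [List.replicate_succ, show List.replicate (k+1) false
      = List.replicate k false ++ [false] from List.replicate_succ']
    simp [word]

lemma blow_replicate_false (m k : ℕ) :
    blow m (List.replicate k false) = List.replicate k false := by
  induction k with
  | zero => rfl
  | succ k ih => rw [List.replicate_succ, blow_cons_false, ih, ← List.replicate_succ]

lemma word_comb {m : ℕ} (hm : 0 < m) : ∀ n, word (comb n m) = blow m (pmin m n) := by
  intro n
  induction n with
  | zero => rfl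
  | succ n ih =>
    rw [show comb (n+1) m = Tree0.node (comb n m) (rightChain (m-1)) from rfl, word, ih,
      show pmin m (n+1) = pmin m n ++ true :: List.replicate m false from rfl, blow_append]
    congr 1
    rw [word_rightChain, blow_cons_true, blow_replicate_false]
    obtain ⟨m', rfl⟩ : ∃ m', m = m' + 1 := ⟨m - 1, by omega⟩
    rw [show m' + 1 - 1 = m' from rfl]
    rw [List.replicate_succ (n := m') (a := true), show List.replicate (m'+1) false
      = List.replicate m' false ++ [false] from List.replicate_succ']
    simp

lemma all_false {p : List Bool} (h : p.count true = 0) :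
    p = List.replicate p.length false := by
  induction p with
  | nil => rfl
  | cons x p ih =>
    cases x
    · rw [List.length_cons, List.replicate_succ]
      rw [List.count_cons] at h
      simp at h
      rw [← ih h]
    · rw [List.count_cons] at h
      simp at h

lemma exists_last_true : ∀ {p : List Bool}, p.count true ≠ 0 →
    ∃ e s, p = e ++ true :: List.replicate s false := by
  intro p
  induction p with
  | nil => intro h; simp at h
  | cons x p ih =>
    intro h
    rcases eq_or_ne (p.count true) 0 with h0 | h0
    · cases x
      · exfalso; rw [List.count_cons] at h; simp [h0] at h
      · refine ⟨[], p.length, ?_⟩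
        conv_lhs => rw [all_false h0]
        simp
    · obtain ⟨e, s, he⟩ := ih h0
      exact ⟨x :: e, s, by rw [he]; rfl⟩

lemma min_of_no_pattern {m : ℕ} (hm : 0 < m) :
    ∀ (N : ℕ) (p : List Bool), p.length ≤ N → IsBallot m (p.count true) p →
    (¬ ∃ u v, p = u ++ true :: (List.replicate m false ++ false :: v)) →
    p = pmin m (p.count true) := by
  intro N
  induction N with
  | zero =>
    intro p hlen _ _
    have : p = [] := List.length_eq_zero_iff.1 (by omega)
    subst this
    rfl
  | succ N ih =>
    intro p hlen hb hnp
    rcases eq_or_ne p [] with rfl | hne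
    · rfl
    have hT : p.count true ≠ 0 := by
      intro h0
      have := hb.2.1
      rw [h0] at this
      simp at this
      have := length_counts p
      exact hne (List.length_eq_zero_iff.1 (by omega))
    obtain ⟨e, s, rfl⟩ := exists_last_true hT
    have hcount : e.count false + s = m * (e.count true + 1) := by
      have := hb.2.1
      have h1 := hb.1
      simp [List.count_append, List.count_cons, List.count_replicate] at this h1 ⊢
      omega
    have hepre : e.count false ≤ m * e.count true := hb.2.2 e (List.prefix_append _ _)
    have hsm : m ≤ s := by
      rw [Nat.mul_add, Nat.mul_one] at hcount
      omega
    have hsm2 : s ≤ m := by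
      by_contra h
      push_neg at h
      apply hnp
      have hrep : List.replicate s false
          = List.replicate m false ++ false :: List.replicate (s - m - 1) false := by
        conv_lhs => rw [show s = m + ((s - m - 1) + 1) by omega]
        rw [List.replicate_add, List.replicate_succ]
      exact ⟨e, List.replicate (s - m - 1) false, by rw [hrep]⟩
    have hs : s = m := le_antisymm hsm2 hsm
    rw [hs] at hcount ⊢
    have hebal : e.count false = m * e.count true := by
      rw [Nat.mul_add, Nat.mul_one] at hcount
      omega
    have heb : IsBallot m (e.count true) e :=
      ⟨rfl, hebal, fun q hq => hb.2.2 q (hq.trans (List.prefix_append _ _))⟩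
    have henp : ¬ ∃ u v, e = u ++ true :: (List.replicate m false ++ false :: v) := by
      rintro ⟨u, v, rfl⟩
      apply hnp
      exact ⟨u, v ++ true :: List.replicate s false, by simp⟩
    have helen : e.length ≤ N := by
      have := hlen
      simp [List.length_append] at this
      omega
    have hmin := ih e helen heb henp
    have hTcount : (e ++ true :: List.replicate m false).count true = e.count true + 1 := by
      simp [List.count_append, List.count_cons, List.count_replicate]
    rw [hTcount, pmin, ← hmin]

def nu : List Bool → ℕ
  | [] => 0
  | true :: p => nu p
  | false :: p => nu p + p.count true

@[simp] lemma nu_nil : nu [] = 0 := rfl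
@[simp] lemma nu_cons_true (p) : nu (true :: p) = nu p := rfl
@[simp] lemma nu_cons_false (p) : nu (false :: p) = nu p + p.count true := rfl

lemma nu_append (x y : List Bool) :
    nu (x ++ y) = nu x + nu y + x.count false * y.count true := by
  induction x with
  | nil => simp
  | cons a x ih =>
    cases a
    · simp [ih, List.count_append, List.count_cons, Nat.add_mul]
      ring
    · simp [ih, List.count_cons]

lemma nu_le (p : List Bool) : nu p ≤ p.length * p.length := by
  induction p with
  | nil => simp
  | cons x p ih =>
    have hc : p.count true ≤ p.length := List.count_le_length
    cases x
    · simp only [nu_cons_false, List.length_cons]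
      nlinarith
    · simp only [nu_cons_true, List.length_cons]
      nlinarith

lemma nu_rot {m : ℕ} {u d v : List Bool} :
    nu (u ++ false :: (d ++ v)) = nu (u ++ d ++ false :: v) + d.count true := by
  simp [nu_append, List.count_append, List.count_cons]
  ring

lemma ballot_unrot {m n : ℕ} {u d v : List Bool} (hm : 0 < m)
    (hd : IsPrimitive m d) (hb : IsBallot m n (u ++ d ++ false :: v)) :
    IsBallot m n (u ++ false :: (d ++ v)) := by
  obtain ⟨hc1, hc2, hc3⟩ := hb
  have hkey : u.count false + 1 ≤ m * u.count true := by
    have h1 := hc3 (u ++ d ++ [false]) ⟨v, by simp⟩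
    have hdb := hd.2.1
    simp [List.count_append, List.count_cons, Nat.mul_add] at h1
    omega
  refine ⟨?_, ?_, ?_⟩
  · rw [← hc1]; simp [List.count_append, List.count_cons]; try omega
  · rw [← hc2]; simp [List.count_append, List.count_cons]; try omega
  · intro w hw
    rcases prefix_append_cases hw with h1 | ⟨w₂, rfl, hw₂⟩
    · exact hc3 w (h1.trans ⟨d ++ false :: v, by simp⟩)
    rcases List.prefix_cons_iff.1 hw₂ with rfl | ⟨w₃, rfl, hw₃⟩
    · simp [List.count_append, List.count_cons]
      omega
    rcases prefix_append_cases hw₃ with h2 | ⟨w₄, rfl, hw₄⟩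
    · have h3 := primitive_count_le hd _ h2
      simp [List.count_append, List.count_cons, Nat.mul_add]
      omega
    · obtain ⟨s, rfl⟩ := hw₄
      have h4 := hc3 (u ++ d ++ false :: w₄) ⟨s, by simp⟩
      simp [List.count_append, List.count_cons, Nat.mul_add] at h4 ⊢
      omega

lemma reach_min {m n : ℕ} (hm : 0 < m) :
    ∀ (k : ℕ) (p : List Bool), IsBallot m n p →
      p.length * p.length ≤ nu p + k →
      Relation.ReflTransGen (PathRot m) (pmin m n) p := by
  intro k
  induction k with
  | zero =>
    intro p hb hk
    rcases eq_or_ne p (pmin m n) with rfl | hne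
    · exact Relation.ReflTransGen.refl
    exfalso
    have hT : p.count true = n := hb.1
    have hnp : ∃ u v, p = u ++ true :: (List.replicate m false ++ false :: v) := by
      by_contra h
      exact hne (by rw [min_of_no_pattern hm p.length p le_rfl (hT ▸ hb) h, hT])
    obtain ⟨u, v, rfl⟩ := hnp
    set d : List Bool := true :: List.replicate m false with hd
    have hdprim : IsPrimitive m d := by
      refine ⟨by simp [hd], by simp [hd, List.count_cons, List.count_replicate], ?_⟩
      intro q hq hqne hqd
      rw [hd] at hq
      rcases List.prefix_cons_iff.1 hq with rfl | ⟨w₃, rfl, hw₃⟩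
      · exact absurd rfl hqne
      · have h3 : w₃ = List.replicate w₃.length false := by
          have := List.prefix_iff_eq_take.1 hw₃
          rw [List.take_replicate] at this
          have hlen : w₃.length ≤ m := by simpa using hw₃.length_le
          rw [Nat.min_eq_left hlen] at this
          exact this
        have hlen : w₃.length ≤ m := by simpa using hw₃.length_le
        have hlt : w₃.length < m := by
          rcases Nat.lt_or_ge w₃.length m with h | h
          · exact h
          · exfalso
            apply hqd
            rw [hd]
            congr 1
            rw [h3]
            congr 1
            omega
        rw [h3]
        simp [List.count_cons, List.count_replicate]
        omega
    have hq : PathRot m (u ++ false :: (d ++ v)) (u ++ d ++ false :: v) :=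
      ⟨u, d, v, hdprim, rfl, rfl⟩
    have hp_eq : u ++ true :: (List.replicate m false ++ false :: v) = u ++ d ++ false :: v := by
      simp [hd]
    have hnu := nu_rot (m := m) (u := u) (d := d) (v := v)
    have hTd : 0 < d.count true := primitive_true_pos hdprim
    have hlen_eq : (u ++ false :: (d ++ v)).length = (u ++ d ++ false :: v).length := by
      simp; omega
    have hsq : (u ++ false :: (d ++ v)).length * (u ++ false :: (d ++ v)).length
        = (u ++ d ++ false :: v).length * (u ++ d ++ false :: v).length := by rw [hlen_eq]
    have hle := nu_le (u ++ false :: (d ++ v))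
    rw [hp_eq] at hk
    omega
  | succ k ih =>
    intro p hb hk
    rcases eq_or_ne p (pmin m n) with rfl | hne
    · exact Relation.ReflTransGen.refl
    have hT : p.count true = n := hb.1
    have hnp : ∃ u v, p = u ++ true :: (List.replicate m false ++ false :: v) := by
      by_contra h
      exact hne (by rw [min_of_no_pattern hm p.length p le_rfl (hT ▸ hb) h, hT])
    obtain ⟨u, v, rfl⟩ := hnp
    set d : List Bool := true :: List.replicate m false with hd
    have hdprim : IsPrimitive m d := by
      refine ⟨by simp [hd], by simp [hd, List.count_cons, List.count_replicate], ?_⟩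
      intro q hq hqne hqd
      rw [hd] at hq
      rcases List.prefix_cons_iff.1 hq with rfl | ⟨w₃, rfl, hw₃⟩
      · exact absurd rfl hqne
      · have h3 : w₃ = List.replicate w₃.length false := by
          have := List.prefix_iff_eq_take.1 hw₃
          rw [List.take_replicate] at this
          have hlen : w₃.length ≤ m := by simpa using hw₃.length_le
          rw [Nat.min_eq_left hlen] at this
          exact this
        have hlen : w₃.length ≤ m := by simpa using hw₃.length_le
        have hlt : w₃.length < m := by
          rcases Nat.lt_or_ge w₃.length m with h | h
          · exact h
          · exfalso
            apply hqd
            rw [hd]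
            congr 1
            rw [h3]
            congr 1
            omega
        rw [h3]
        simp [List.count_cons, List.count_replicate]
        omega
    have hp_eq : u ++ true :: (List.replicate m false ++ false :: v) = u ++ d ++ false :: v := by
      simp [hd]
    have hq : PathRot m (u ++ false :: (d ++ v)) (u ++ d ++ false :: v) :=
      ⟨u, d, v, hdprim, rfl, rfl⟩
    have hqb : IsBallot m n (u ++ false :: (d ++ v)) :=
      ballot_unrot hm hdprim (by rw [← hp_eq]; exact hb)
    have hnu := nu_rot (m := m) (u := u) (d := d) (v := v)
    have hTd : 0 < d.count true := primitive_true_pos hdprim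
    have hlen_eq : (u ++ false :: (d ++ v)).length = (u ++ d ++ false :: v).length := by
      simp; omega
    have hsq : (u ++ false :: (d ++ v)).length * (u ++ false :: (d ++ v)).length
        = (u ++ d ++ false :: v).length * (u ++ d ++ false :: v).length := by rw [hlen_eq]
    have hstep := ih (u ++ false :: (d ++ v)) hqb (by rw [hp_eq] at hk; omega)
    rw [hp_eq]
    exact hstep.tail hq

end MT


namespace MT
open Tree0 List

lemma transfer_forward {m : ℕ} (hm : 0 < m) {x y : List Bool}
    (h : Relation.ReflTransGen (PathRot m) x y) :
    ∀ tx : Tree0, word tx = blow m x → ∃ ty, word ty = blow m y ∧ tamariLE tx ty := by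
  induction h with
  | refl => intro tx htx; exact ⟨tx, htx, Relation.ReflTransGen.refl⟩
  | tail hab hbc ih =>
    intro tx htx
    obtain ⟨tb, htb, hle⟩ := ih tx htx
    obtain ⟨u, d, v, hd, h1, h2⟩ := pathRot_blow hm hbc
    obtain ⟨tc, hrot, htc⟩ := pathRot_lift tb u d v hd (by rw [htb, h1])
    exact ⟨tc, by rw [htc, ← h2], hle.tail hrot⟩

lemma transfer_backward {m : ℕ} (hm : 0 < m) {tx ty : Tree0} (h : tamariLE tx ty) :
    ∀ x : List Bool, word tx = blow m x → ∃ y, word ty = blow m y ∧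
      Relation.ReflTransGen (PathRot m) x y := by
  have h' : Relation.ReflTransGen Rot tx ty := h
  clear h
  induction h' with
  | refl => intro x hx; exact ⟨x, hx, Relation.ReflTransGen.refl⟩
  | @tail tb tc hab hbc ih =>
    intro x hx
    obtain ⟨b, hb, hrtg⟩ := ih x hx
    have hpr : PathRot 1 (blow m b) (word tc) := by rw [← hb]; exact rot_pathRot hbc
    obtain ⟨c, hc, hpc⟩ := pathRot_contract hm hpr
    exact ⟨c, hc.symm, hrtg.tail hpc⟩

lemma rtg_subtype {m n : ℕ} {x y : List Bool}
    (h : Relation.ReflTransGen (PathRot m) x y) (hx : IsBallot m n x) :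
    ∀ hy : IsBallot m n y,
      Relation.ReflTransGen (fun a b : {p : List Bool // IsBallot m n p} => PathRot m a.1 b.1)
        ⟨x, hx⟩ ⟨y, hy⟩ := by
  induction h with
  | refl => intro hy; exact Relation.ReflTransGen.refl
  | tail hab hbc ih =>
    intro hy
    exact Relation.ReflTransGen.tail (ih (ballot_rtg hx hab)) hbc

end MT

/-- The `m`-Tamari lattice `T_n^{(m)}` on `m`-ballot paths of size `n`
is isomorphic to the upper ideal of the ordinary Tamari lattice on binary trees with
`nm` nodes generated by the `(n,m)`-comb. -/
theorem mTamari_iso_upper_ideal (m n : ℕ) (hm : 0 < m) :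
    ∃ f : {p : List Bool // IsBallot m n p} ≃
          {t : Tree0 // Tree0.tamariLE (Tree0.comb n m) t},
      ∀ p q : {p : List Bool // IsBallot m n p},
        Relation.ReflTransGen (fun a b : {p : List Bool // IsBallot m n p} =>
            PathRot m a.1 b.1) p q ↔ Tree0.tamariLE (f p).1 (f q).1 := by
  classical
  have hpmin : IsBallot m n (MT.pmin m n) := MT.pmin_ballot m n
  have hwcomb : MT.word (Tree0.comb n m) = MT.blow m (MT.pmin m n) := MT.word_comb hm n
  have hex : ∀ p : {p : List Bool // IsBallot m n p},
      ∃ t, MT.word t = MT.blow m p.1 ∧ Tree0.tamariLE (Tree0.comb n m) t := by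
    intro p
    have hr := MT.reach_min hm (p.1.length * p.1.length) p.1 p.2 (Nat.le_add_left _ _)
    obtain ⟨t, ht, hle⟩ := MT.transfer_forward hm hr (Tree0.comb n m) hwcomb
    exact ⟨t, ht, hle⟩
  choose ft hft1 hft2 using hex
  have hexg : ∀ t : {t : Tree0 // Tree0.tamariLE (Tree0.comb n m) t},
      ∃ y, MT.word t.1 = MT.blow m y ∧ IsBallot m n y := by
    intro t
    obtain ⟨y, hy, hrtg⟩ := MT.transfer_backward hm t.2 (MT.pmin m n) hwcomb
    exact ⟨y, hy, MT.ballot_rtg hpmin hrtg⟩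
  choose g hg1 hg2 using hexg
  refine ⟨⟨fun p => ⟨ft p, hft2 p⟩, fun t => ⟨g t, hg2 t⟩, ?_, ?_⟩, ?_⟩
  · intro p
    apply Subtype.ext
    exact MT.blow_inj hm ((hg1 ⟨ft p, hft2 p⟩).symm.trans (hft1 p))
  · intro t
    apply Subtype.ext
    exact MT.word_inj ((hft1 ⟨g t, hg2 t⟩).trans (hg1 t).symm)
  · intro p q
    constructor
    · intro h
      have hlist : Relation.ReflTransGen (PathRot m) p.1 q.1 :=
        Relation.ReflTransGen.lift
          (fun a : {p : List Bool // IsBallot m n p} => a.1) (fun a b hab => hab) _ _ h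
      obtain ⟨ty, hty, hle⟩ := MT.transfer_forward hm hlist (ft p) (hft1 p)
      have hq : ty = ft q := MT.word_inj (hty.trans (hft1 q).symm)
      show Tree0.tamariLE (ft p) (ft q)
      exact hq ▸ hle
    · intro h
      obtain ⟨y, hy, hrtg⟩ := MT.transfer_backward hm h p.1 (hft1 p)
      have hyq : y = q.1 := MT.blow_inj hm (hy.symm.trans (hft1 q))
      rw [hyq] at hrtg
      exact MT.rtg_subtype hrtg p.2 q.2
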